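/- arXiv:2508.16141 — 2 statements merged into one kernel-verified Lean document; each statement's English description precedes it below -/
import Mathlib

section
/- Let U be unitary on H and G : K → H an isometry with G†UG Hermitian and G†U²G = I. Suppose λ is an eigenvalue of G†UG with eigenvector φ and |λ| = 1. Then Gφ is an eigenvector of the walk operator W = (2GG† − I)U with eigenvalue λ. -/
open ContinuousLinearMap

/-- **Walk operator spectral structure (|λ| = 1 branch).**
Let `U` be unitary on `H`, `G : K → H` an isometry with `G†UG` Hermitian and
`G†U²G = 1`. If `φ` is an eigenvector of `G†UG` with real eigenvalue `λ` of
modulus one, then `Gφ` is an eigenvector of the walk operator `W = (2GG† − 1)U`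
with eigenvalue `λ`. -/
theorem walk_operator_eigenvector_of_abs_eq_one
    {p q : ℕ}
    (U : EuclideanSpace ℂ (Fin p) →L[ℂ] EuclideanSpace ℂ (Fin p))
    (hU : adjoint U ∘L U = 1) (hU' : U ∘L adjoint U = 1)
    (G : EuclideanSpace ℂ (Fin q) →L[ℂ] EuclideanSpace ℂ (Fin p))
    (hG : adjoint G ∘L G = 1)
    (hHerm : IsSelfAdjoint (adjoint G ∘L U ∘L G))
    (hU2 : adjoint G ∘L (U ∘L U) ∘L G = 1)
    (lam : ℝ) (hlam : |lam| = 1)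
    (φ : EuclideanSpace ℂ (Fin q)) (hφ : φ ≠ 0)
    (heig : (adjoint G ∘L U ∘L G) φ = (lam : ℂ) • φ) :
    ((2 • (G ∘L adjoint G) - 1) ∘L U) (G φ) = (lam : ℂ) • G φ := by
  have hlam2 : (lam : ℂ) * (lam : ℂ) = 1 := by
    have h : lam * lam = 1 := by
      rcases abs_eq (by norm_num : (0:ℝ) ≤ 1) |>.mp hlam with h | h <;> rw [h] <;> norm_num
    exact_mod_cast h
  set x := U (G φ) with hx
  have hGx : adjoint G x = (lam : ℂ) • φ := heig
  -- inner products
  have hGG : ∀ z : EuclideanSpace ℂ (Fin q), inner ℂ (G z) (G z) = (inner ℂ z z : ℂ) := by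
    intro z
    rw [← adjoint_inner_left]
    change inner ℂ ((adjoint G ∘L G) z) z = _
    rw [hG]; rfl
  have hxx : (inner ℂ x x : ℂ) = inner ℂ φ φ := by
    rw [hx, ← adjoint_inner_left]
    change inner ℂ ((adjoint U ∘L U) (G φ)) (G φ) = _
    rw [hU]
    exact hGG φ
  set y := G ((lam : ℂ) • φ) with hy
  have hxy : (inner ℂ x y : ℂ) = inner ℂ φ φ := by
    rw [hy, ← adjoint_inner_left, hGx, inner_smul_left, inner_smul_right,
      Complex.conj_ofReal, ← mul_assoc, hlam2, one_mul]
  have hyx : (inner ℂ y x : ℂ) = inner ℂ φ φ := by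
    rw [← inner_conj_symm, hxy, inner_conj_symm]
  have hyy : (inner ℂ y y : ℂ) = inner ℂ φ φ := by
    rw [hy, hGG, inner_smul_left, inner_smul_right, Complex.conj_ofReal, ← mul_assoc,
      hlam2, one_mul]
  have hxy0 : x = y := by
    have : (inner ℂ (x - y) (x - y) : ℂ) = 0 := by
      rw [inner_sub_sub_self, hxx, hxy, hyx, hyy]; ring
    exact sub_eq_zero.mp (inner_self_eq_zero.mp this)
  have hUG : x = (lam : ℂ) • G φ := by rw [hxy0, hy, map_smul]
  have : ((2 • (G ∘L adjoint G) - 1) ∘L U) (G φ)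
      = 2 • G (adjoint G x) - x := by
    simp [comp_apply, sub_apply, smul_apply]; rfl
  rw [this, hGx, map_smul, hUG, two_smul, add_sub_cancel_right]
end

section
/- For any angles φ₁, …, φ_l ∈ ℝ and θ ∈ ℝ, define R_φ(θ) = exp(−i(θ/2)(cos φ · X + sin φ · Y)) where X, Y are the Pauli matrices. Then the product U_Φ(θ) = R_{φ_l}(θ)⋯R_{φ₁}(θ) can be written as Op(a,b,c,d) = aI + ibZ + icX + idY where a, b are polynomials in x = cos(θ/2) and c, d are polynomials (times x if l is even) in y = sin(θ/2), all with real coefficients, of degree at most l, and satisfying a² + b² + c² + d² = 1 when evaluated at the corresponding point (after accounting for x²+y²=1). -/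
open Matrix Complex

noncomputable section

/-- Pauli `X`. -/
def PX : Matrix (Fin 2) (Fin 2) ℂ := !![0, 1; 1, 0]
/-- Pauli `Y`. -/
def PY : Matrix (Fin 2) (Fin 2) ℂ := !![0, -Complex.I; Complex.I, 0]
/-- Pauli `Z`. -/
def PZ : Matrix (Fin 2) (Fin 2) ℂ := !![1, 0; 0, -1]

/-- `R_φ(θ) = exp(−i(θ/2)(cos φ · X + sin φ · Y))`. -/
def Rrot (φ θ : ℝ) : Matrix (Fin 2) (Fin 2) ℂ :=
  NormedSpace.exp
    ((-(Complex.I * ((θ : ℂ) / 2))) •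
      (((Real.cos φ : ℂ)) • PX + ((Real.sin φ : ℂ)) • PY))

def Op (A B C D : ℂ) : Matrix (Fin 2) (Fin 2) ℂ :=
  A • 1 + (Complex.I * B) • PZ + (Complex.I * C) • PX + (Complex.I * D) • PY

lemma Op_eq (A B C D : ℂ) :
    Op A B C D = !![A + Complex.I*B, Complex.I*C + D; Complex.I*C - D, A - Complex.I*B] := by
  unfold Op PX PY PZ
  ext i j
  fin_cases i <;> fin_cases j <;>
    simp [Matrix.one_fin_two] <;> ring_nf <;> simp [Complex.I_sq] <;> ring_nf

lemma Op_mul (A B C D A' B' C' D' : ℂ) :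
    Op A B C D * Op A' B' C' D' =
      Op (A*A' - B*B' - C*C' - D*D')
         (A*B' + B*A' - C*D' + D*C')
         (A*C' + C*A' + B*D' - D*B')
         (A*D' + D*A' - B*C' + C*B') := by
  rw [Op_eq, Op_eq, Op_eq]
  ext i j
  fin_cases i <;> fin_cases j <;>
    simp [Matrix.mul_apply, Fin.sum_univ_two] <;> ring_nf <;> simp [Complex.I_sq] <;> ring_nf

lemma Op_congr {A B C D A' B' C' D' : ℂ} (h1 : A = A') (h2 : B = B')
    (h3 : C = C') (h4 : D = D') : Op A B C D = Op A' B' C' D' := by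
  rw [h1, h2, h3, h4]

lemma Rrot_eq (φ θ : ℝ) :
    Rrot φ θ = Op ((Real.cos (θ/2) : ℝ) : ℂ) 0
      ((-(Real.sin (θ/2) * Real.cos φ) : ℝ) : ℂ)
      ((-(Real.sin (θ/2) * Real.sin φ) : ℝ) : ℂ) := by
  set z : ℂ := -(Complex.I * ((θ : ℂ) / 2)) with hz
  set c : ℂ := (Real.cos φ : ℂ) with hc
  set s : ℂ := (Real.sin φ : ℂ) with hs
  set x : ℂ := (Real.cos (θ/2) : ℂ) with hx
  set y : ℂ := (Real.sin (θ/2) : ℂ) with hy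
  set e : ℂ := Complex.exp ((φ : ℂ) * Complex.I) with hedef
  set e' : ℂ := Complex.exp (-((φ : ℂ) * Complex.I)) with he'def
  have he : e = c + s * Complex.I := by
    rw [hedef, Complex.exp_mul_I]
    simp [hc, hs, Complex.ofReal_cos, Complex.ofReal_sin]
  have he' : e' = c - s * Complex.I := by
    rw [he'def, show -((φ:ℂ) * Complex.I) = (-(φ:ℂ)) * Complex.I by ring,
      Complex.exp_mul_I, Complex.cos_neg, Complex.sin_neg]
    simp [hc, hs, Complex.ofReal_cos, Complex.ofReal_sin]
    ring
  have hee' : e * e' = 1 := by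
    rw [hedef, he'def, ← Complex.exp_add]; simp
  have he'e : e' * e = 1 := by rw [mul_comm]; exact hee'
  have hcs : c^2 + s^2 = 1 := by
    rw [hc, hs]
    norm_cast
    exact Real.cos_sq_add_sin_sq φ
  have hEz : Complex.exp z = x - y * Complex.I := by
    rw [show z = (-((θ:ℂ)/2)) * Complex.I by rw [hz]; ring, Complex.exp_mul_I,
      Complex.cos_neg, Complex.sin_neg, hx, hy, Complex.ofReal_cos, Complex.ofReal_sin]
    push_cast
    ring
  have hEz' : Complex.exp (-z) = x + y * Complex.I := by
    rw [show -z = (((θ:ℂ)/2)) * Complex.I by rw [hz]; ring, Complex.exp_mul_I,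
      hx, hy, Complex.ofReal_cos, Complex.ofReal_sin]
    push_cast
    ring
  have hR : Rrot φ θ = NormedSpace.exp (z • (c • PX + s • PY)) := rfl
  have hCv : ((-(Real.sin (θ/2) * Real.cos φ) : ℝ) : ℂ) = -(y * c) := by
    rw [hc, hy]; push_cast; ring
  have hDv : ((-(Real.sin (θ/2) * Real.sin φ) : ℝ) : ℂ) = -(y * s) := by
    rw [hs, hy]; push_cast; ring
  clear_value z c s x y e e'
  clear hedef he'def hc hs hx hy
  set V : Matrix (Fin 2) (Fin 2) ℂ := !![1, 1; e, -e] with hV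
  set W : Matrix (Fin 2) (Fin 2) ℂ := !![1/2, e'/2; 1/2, -(e'/2)] with hW
  have hVW : V * W = 1 := by
    ext i j
    fin_cases i <;> fin_cases j <;>
      simp [hV, hW, Matrix.mul_apply, Fin.sum_univ_two, Matrix.one_fin_two] <;>
      field_simp <;>
      first
        | linear_combination hee'
        | linear_combination -hee'
        | linear_combination (2 : ℂ) * hee'
        | linear_combination (-2 : ℂ) * hee'
        | norm_num
  have hWV : W * V = 1 := by
    ext i j
    fin_cases i <;> fin_cases j <;>
      simp [hV, hW, Matrix.mul_apply, Fin.sum_univ_two, Matrix.one_fin_two] <;>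
      field_simp <;>
      first
        | linear_combination he'e
        | linear_combination -he'e
        | linear_combination (2 : ℂ) * he'e
        | linear_combination (-2 : ℂ) * he'e
  set U : (Matrix (Fin 2) (Fin 2) ℂ)ˣ := ⟨V, W, hVW, hWV⟩ with hU
  have hUinv : (↑U⁻¹ : Matrix (Fin 2) (Fin 2) ℂ) = W := rfl
  have hUval : (↑U : Matrix (Fin 2) (Fin 2) ℂ) = V := rfl
  have hD : Matrix.diagonal ![z, -z] = !![z, 0; 0, -z] := by
    ext i j; fin_cases i <;> fin_cases j <;> simp [Matrix.diagonal]
  have key : z • (c • PX + s • PY) =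
      (↑U : Matrix (Fin 2) (Fin 2) ℂ) * (Matrix.diagonal ![z, -z]) *
        (↑U⁻¹ : Matrix (Fin 2) (Fin 2) ℂ) := by
    rw [hUinv, hUval, hD, hV, hW]
    ext i j
    fin_cases i <;> fin_cases j <;>
      simp [PX, PY, Matrix.mul_apply, Fin.sum_univ_two, he, he'] <;> ring
  have hvec : NormedSpace.exp ![z, -z] = ![Complex.exp z, Complex.exp (-z)] := by
    rw [Pi.exp_def]
    funext i
    fin_cases i <;> simp [← Complex.exp_eq_exp_ℂ]
  have hD2 : Matrix.diagonal ![Complex.exp z, Complex.exp (-z)] =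
      !![Complex.exp z, 0; 0, Complex.exp (-z)] := by
    ext i j; fin_cases i <;> fin_cases j <;> simp [Matrix.diagonal]
  rw [hR, key, Matrix.exp_units_conj, Matrix.exp_diagonal, hvec, hUinv, hUval, hD2,
    Op_eq, hEz, hEz', hCv, hDv, hV, hW]
  ext i j
  fin_cases i <;> fin_cases j <;>
    simp [Matrix.mul_apply, Fin.sum_univ_two] <;>
    first
      | ring1
      | linear_combination x * hee'
      | linear_combination (-(y*Complex.I))*he' + (y*s)*Complex.I_sq
      | linear_combination (-(y*Complex.I))*he + (-(y*s))*Complex.I_sq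
      | linear_combination (y*Complex.I)*he' + (y*s)*Complex.I_sq
      | linear_combination (y*Complex.I)*he + (-(y*s))*Complex.I_sq
      | linear_combination (y*Complex.I)*he' + (-(y*s))*Complex.I_sq
      | linear_combination (y*Complex.I)*he + (y*s)*Complex.I_sq
      | linear_combination (-(y*Complex.I))*he' + (-(y*s))*Complex.I_sq
      | linear_combination (-(y*Complex.I))*he + (y*s)*Complex.I_sq

open Polynomial in
lemma deg_add {p q : Polynomial ℝ} {m : ℕ} (hp : p.degree < (m : WithBot ℕ))
    (hq : q.degree < (m : WithBot ℕ)) : (p + q).degree < (m : WithBot ℕ) :=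
  lt_of_le_of_lt (Polynomial.degree_add_le p q) (max_lt hp hq)

open Polynomial in
lemma deg_sub {p q : Polynomial ℝ} {m : ℕ} (hp : p.degree < (m : WithBot ℕ))
    (hq : q.degree < (m : WithBot ℕ)) : (p - q).degree < (m : WithBot ℕ) :=
  lt_of_le_of_lt (Polynomial.degree_sub_le p q) (max_lt hp hq)

open Polynomial in
lemma deg_mul {u v : Polynomial ℝ} {a b c : ℕ} (hu : u.degree ≤ (a : WithBot ℕ))
    (hv : v.degree < (b : WithBot ℕ)) (h : ∀ n : ℕ, n < b → a + n < c) :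
    (u * v).degree < (c : WithBot ℕ) := by
  rcases eq_or_ne v 0 with rfl | hv0
  · rw [mul_zero, Polynomial.degree_zero]
    exact WithBot.bot_lt_coe c
  rcases eq_or_ne u 0 with rfl | hu0
  · rw [zero_mul, Polynomial.degree_zero]
    exact WithBot.bot_lt_coe c
  have hdm := Polynomial.degree_mul_le u v
  rw [Polynomial.degree_eq_natDegree hv0] at hv
  rw [Polynomial.degree_eq_natDegree hu0] at hu
  have hv' : v.natDegree < b := by exact_mod_cast hv
  have hu' : u.natDegree ≤ a := by exact_mod_cast hu
  have hc : u.natDegree + v.natDegree < c := by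
    have := h v.natDegree hv'
    omega
  calc (u * v).degree ≤ u.degree + v.degree := hdm
    _ = ((u.natDegree + v.natDegree : ℕ) : WithBot ℕ) := by
        rw [Polynomial.degree_eq_natDegree hv0, Polynomial.degree_eq_natDegree hu0]
        push_cast
        rfl
    _ < (c : WithBot ℕ) := by exact_mod_cast hc

open Polynomial in
lemma deg_C_mul {v : Polynomial ℝ} {b : ℕ} (r : ℝ) (hv : v.degree < (b : WithBot ℕ)) :
    (Polynomial.C r * v).degree < (b : WithBot ℕ) :=
  deg_mul (a := 0) (by exact_mod_cast Polynomial.degree_C_le) hv (fun n hn => by omega)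

open Polynomial in
lemma natDeg_le_of_deg_lt {p : Polynomial ℝ} {m : ℕ}
    (h : p.degree < ((m + 1 : ℕ) : WithBot ℕ)) : p.natDegree ≤ m := by
  rcases eq_or_ne p 0 with rfl | hp
  · simp
  · rw [Polynomial.degree_eq_natDegree hp] at h
    exact_mod_cast Nat.lt_succ_iff.mp (by exact_mod_cast h)

open Polynomial in
lemma deg_lt_mono {p : Polynomial ℝ} {m m' : ℕ} (h : p.degree < (m : WithBot ℕ))
    (hmm : m ≤ m') : p.degree < (m' : WithBot ℕ) :=
  lt_of_lt_of_le h (by exact_mod_cast hmm)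

open Polynomial in
lemma deg_X_le' : (Polynomial.X : Polynomial ℝ).degree ≤ ((1 : ℕ) : WithBot ℕ) := by
  exact_mod_cast Polynomial.degree_X_le

open Polynomial in
lemma deg_one_sub_X_sq : ((1 : Polynomial ℝ) - Polynomial.X^2).degree ≤ ((2 : ℕ) : WithBot ℕ) := by
  refine le_trans (Polynomial.degree_sub_le _ _) ?_
  rw [Polynomial.degree_X_pow, Polynomial.degree_one]
  norm_num

open Polynomial in
lemma deg_X_sq : ((Polynomial.X : Polynomial ℝ)^2).degree ≤ ((2 : ℕ) : WithBot ℕ) := by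
  rw [Polynomial.degree_X_pow]

open Polynomial in
lemma qsp_aux (l : ℕ) : ∀ (φ : Fin l → ℝ),
    ∃ P Q R S P2 Q2 R2 S2 : Polynomial ℝ,
      P.degree < ((l + (1 - l % 2) : ℕ) : WithBot ℕ) ∧
      Q.degree < ((l + (1 - l % 2) : ℕ) : WithBot ℕ) ∧
      R.degree < ((l + l % 2 : ℕ) : WithBot ℕ) ∧
      S.degree < ((l + l % 2 : ℕ) : WithBot ℕ) ∧
      P2.degree < ((l + (1 - l % 2) : ℕ) : WithBot ℕ) ∧
      Q2.degree < ((l + (1 - l % 2) : ℕ) : WithBot ℕ) ∧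
      R2.degree < ((l - 1 + l % 2 : ℕ) : WithBot ℕ) ∧
      S2.degree < ((l - 1 + l % 2 : ℕ) : WithBot ℕ) ∧
      ∀ θ : ℝ,
        P.eval (Real.sin (θ/2)) = P2.eval (Real.cos (θ/2)) ∧
        Q.eval (Real.sin (θ/2)) = Q2.eval (Real.cos (θ/2)) ∧
        R.eval (Real.sin (θ/2)) = Real.sin (θ/2) * R2.eval (Real.cos (θ/2)) ∧
        S.eval (Real.sin (θ/2)) = Real.sin (θ/2) * S2.eval (Real.cos (θ/2)) ∧
        (List.ofFn fun i : Fin l => Rrot (φ i) θ).reverse.prod =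
          Op ((Real.cos (θ/2) ^ (l % 2) * P.eval (Real.sin (θ/2)) : ℝ) : ℂ)
             ((Real.cos (θ/2) ^ (l % 2) * Q.eval (Real.sin (θ/2)) : ℝ) : ℂ)
             ((Real.cos (θ/2) ^ (1 - l % 2) * R.eval (Real.sin (θ/2)) : ℝ) : ℂ)
             ((Real.cos (θ/2) ^ (1 - l % 2) * S.eval (Real.sin (θ/2)) : ℝ) : ℂ) ∧
        (Real.cos (θ/2) ^ (l % 2) * P.eval (Real.sin (θ/2)))^2 +
          (Real.cos (θ/2) ^ (l % 2) * Q.eval (Real.sin (θ/2)))^2 +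
          (Real.cos (θ/2) ^ (1 - l % 2) * R.eval (Real.sin (θ/2)))^2 +
          (Real.cos (θ/2) ^ (1 - l % 2) * S.eval (Real.sin (θ/2)))^2 = 1 := by
  induction l with
  | zero =>
    intro φ
    refine ⟨1, 0, 0, 0, 1, 0, 0, 0, ?_, ?_, ?_, ?_, ?_, ?_, ?_, ?_, ?_⟩
    · rw [Polynomial.degree_one]; exact_mod_cast WithBot.coe_lt_coe.mpr (by norm_num : (0:ℕ) < 1)
    · rw [Polynomial.degree_zero]; exact WithBot.bot_lt_coe _
    · rw [Polynomial.degree_zero]; exact WithBot.bot_lt_coe _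
    · rw [Polynomial.degree_zero]; exact WithBot.bot_lt_coe _
    · rw [Polynomial.degree_one]; exact_mod_cast WithBot.coe_lt_coe.mpr (by norm_num : (0:ℕ) < 1)
    · rw [Polynomial.degree_zero]; exact WithBot.bot_lt_coe _
    · rw [Polynomial.degree_zero]; exact WithBot.bot_lt_coe _
    · rw [Polynomial.degree_zero]; exact WithBot.bot_lt_coe _
    intro θ
    refine ⟨by simp, by simp, by simp, by simp, ?_, by norm_num⟩
    simp [Op]
  | succ l ih =>
    intro φ
    obtain ⟨P, Q, R, S, P2, Q2, R2, S2, dP, dQ, dR, dS, dP2, dQ2, dR2, dS2, hpt⟩ :=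
      ih (fun i => φ i.castSucc)
    set cf : ℝ := Real.cos (φ (Fin.last l)) with hcf
    set sf : ℝ := Real.sin (φ (Fin.last l)) with hsf
    have hcs : cf^2 + sf^2 = 1 := Real.cos_sq_add_sin_sq _
    have hsplit : ∀ θ : ℝ, (List.ofFn fun i : Fin (l+1) => Rrot (φ i) θ).reverse.prod
        = Rrot (φ (Fin.last l)) θ *
          (List.ofFn fun i : Fin l => Rrot (φ i.castSucc) θ).reverse.prod := by
      intro θ
      rw [List.ofFn_succ']
      rw [List.concat_eq_append, List.reverse_append]
      simp
    rcases Nat.even_or_odd l with hev | hod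
    · -- l even
      have h0 : l % 2 = 0 := Nat.even_iff.mp hev
      have h1 : (l+1) % 2 = 1 := by omega
      refine ⟨P + X * (C cf * R + C sf * S),
              Q + X * (C cf * S - C sf * R),
              (1 - X^2) * R - C cf * (X * P) + C sf * (X * Q),
              (1 - X^2) * S - C sf * (X * P) - C cf * (X * Q),
              P2 + (1 - X^2) * (C cf * R2 + C sf * S2),
              Q2 + (1 - X^2) * (C cf * S2 - C sf * R2),
              X^2 * R2 - C cf * P2 + C sf * Q2,
              X^2 * S2 - C sf * P2 - C cf * Q2,
              ?_, ?_, ?_, ?_, ?_, ?_, ?_, ?_, ?_⟩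
      · exact deg_add (deg_lt_mono dP (by omega))
          (deg_mul deg_X_le' (deg_add (deg_C_mul _ dR) (deg_C_mul _ dS)) (fun n hn => by omega))
      · exact deg_add (deg_lt_mono dQ (by omega))
          (deg_mul deg_X_le' (deg_sub (deg_C_mul _ dS) (deg_C_mul _ dR)) (fun n hn => by omega))
      · exact deg_add (deg_sub
          (deg_mul deg_one_sub_X_sq dR (fun n hn => by omega))
          (deg_C_mul _ (deg_mul deg_X_le' dP (fun n hn => by omega))))
          (deg_C_mul _ (deg_mul deg_X_le' dQ (fun n hn => by omega)))
      · exact deg_sub (deg_sub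
          (deg_mul deg_one_sub_X_sq dS (fun n hn => by omega))
          (deg_C_mul _ (deg_mul deg_X_le' dP (fun n hn => by omega))))
          (deg_C_mul _ (deg_mul deg_X_le' dQ (fun n hn => by omega)))
      · exact deg_add (deg_lt_mono dP2 (by omega))
          (deg_mul deg_one_sub_X_sq (deg_add (deg_C_mul _ dR2) (deg_C_mul _ dS2))
            (fun n hn => by omega))
      · exact deg_add (deg_lt_mono dQ2 (by omega))
          (deg_mul deg_one_sub_X_sq (deg_sub (deg_C_mul _ dS2) (deg_C_mul _ dR2))
            (fun n hn => by omega))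
      · exact deg_add (deg_sub
          (deg_mul deg_X_sq dR2 (fun n hn => by omega))
          (deg_C_mul _ (deg_lt_mono dP2 (by omega))))
          (deg_C_mul _ (deg_lt_mono dQ2 (by omega)))
      · exact deg_sub (deg_sub
          (deg_mul deg_X_sq dS2 (fun n hn => by omega))
          (deg_C_mul _ (deg_lt_mono dP2 (by omega))))
          (deg_C_mul _ (deg_lt_mono dQ2 (by omega)))
      intro θ
      obtain ⟨hP, hQ, hR, hS, hprod, hnorm⟩ := hpt θ
      set x : ℝ := Real.cos (θ/2) with hxdef
      set y : ℝ := Real.sin (θ/2) with hydef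
      have hxy : x^2 + y^2 = 1 := Real.cos_sq_add_sin_sq _
      have hxyc : (x:ℂ)^2 + (y:ℂ)^2 = 1 := by exact_mod_cast hxy
      simp only [h0, h1, Nat.sub_zero, Nat.sub_self, pow_zero, pow_one, one_mul]
        at hprod hnorm ⊢
      refine ⟨?_, ?_, ?_, ?_, ?_, ?_⟩
      · simp only [Polynomial.eval_add, Polynomial.eval_mul, Polynomial.eval_sub,
          Polynomial.eval_one, Polynomial.eval_pow, Polynomial.eval_X, Polynomial.eval_C]
        linear_combination hP + (y*cf)*hR + (y*sf)*hS + (cf * R2.eval x + sf * S2.eval x) * hxy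
      · simp only [Polynomial.eval_add, Polynomial.eval_mul, Polynomial.eval_sub,
          Polynomial.eval_one, Polynomial.eval_pow, Polynomial.eval_X, Polynomial.eval_C]
        linear_combination hQ + (y*cf)*hS - (y*sf)*hR + (cf * S2.eval x - sf * R2.eval x) * hxy
      · simp only [Polynomial.eval_add, Polynomial.eval_mul, Polynomial.eval_sub,
          Polynomial.eval_one, Polynomial.eval_pow, Polynomial.eval_X, Polynomial.eval_C]
        linear_combination (1 - y^2)*hR - (y*cf)*hP + (y*sf)*hQ - (y * R2.eval x) * hxy
      · simp only [Polynomial.eval_add, Polynomial.eval_mul, Polynomial.eval_sub,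
          Polynomial.eval_one, Polynomial.eval_pow, Polynomial.eval_X, Polynomial.eval_C]
        linear_combination (1 - y^2)*hS - (y*sf)*hP - (y*cf)*hQ - (y * S2.eval x) * hxy
      · rw [hsplit θ, hprod, Rrot_eq, Op_mul, ← hcf, ← hsf, ← hxdef, ← hydef]
        simp only [Polynomial.eval_add, Polynomial.eval_mul, Polynomial.eval_sub,
          Polynomial.eval_one, Polynomial.eval_pow, Polynomial.eval_X, Polynomial.eval_C]
        apply Op_congr <;> push_cast <;>
          first
            | ring1
            | linear_combination ((R.eval y : ℝ) : ℂ) * hxyc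
            | linear_combination ((S.eval y : ℝ) : ℂ) * hxyc
      · have rA : x * Polynomial.eval y (P + X * (C cf * R + C sf * S)) =
            x * P.eval y + y*cf*(x*R.eval y) + y*sf*(x*S.eval y) := by
          simp only [Polynomial.eval_add, Polynomial.eval_mul, Polynomial.eval_sub,
            Polynomial.eval_one, Polynomial.eval_pow, Polynomial.eval_X, Polynomial.eval_C]
          ring
        have rB : x * Polynomial.eval y (Q + X * (C cf * S - C sf * R)) =
            x * Q.eval y + y*cf*(x*S.eval y) - y*sf*(x*R.eval y) := by
          simp only [Polynomial.eval_add, Polynomial.eval_mul, Polynomial.eval_sub,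
            Polynomial.eval_one, Polynomial.eval_pow, Polynomial.eval_X, Polynomial.eval_C]
          ring
        have rC : Polynomial.eval y ((1 - X^2) * R - C cf * (X * P) + C sf * (X * Q)) =
            x * (x * R.eval y) - y*cf*(P.eval y) + y*sf*(Q.eval y) := by
          simp only [Polynomial.eval_add, Polynomial.eval_mul, Polynomial.eval_sub,
            Polynomial.eval_one, Polynomial.eval_pow, Polynomial.eval_X, Polynomial.eval_C]
          linear_combination (-(R.eval y)) * hxy
        have rD : Polynomial.eval y ((1 - X^2) * S - C sf * (X * P) - C cf * (X * Q)) =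
            x * (x * S.eval y) - y*sf*(P.eval y) - y*cf*(Q.eval y) := by
          simp only [Polynomial.eval_add, Polynomial.eval_mul, Polynomial.eval_sub,
            Polynomial.eval_one, Polynomial.eval_pow, Polynomial.eval_X, Polynomial.eval_C]
          linear_combination (-(S.eval y)) * hxy
        rw [rA, rB, rC, rD]
        linear_combination (x^2 + y^2*(cf^2+sf^2)) * hnorm + hxy + y^2 * hcs
    · -- l odd
      have h0 : l % 2 = 1 := Nat.odd_iff.mp hod
      have h1 : (l+1) % 2 = 0 := by omega
      refine ⟨(1 - X^2) * P + X * (C cf * R + C sf * S),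
              (1 - X^2) * Q + X * (C cf * S - C sf * R),
              R - C cf * (X * P) + C sf * (X * Q),
              S - C sf * (X * P) - C cf * (X * Q),
              X^2 * P2 + (1 - X^2) * (C cf * R2 + C sf * S2),
              X^2 * Q2 + (1 - X^2) * (C cf * S2 - C sf * R2),
              R2 - C cf * P2 + C sf * Q2,
              S2 - C sf * P2 - C cf * Q2,
              ?_, ?_, ?_, ?_, ?_, ?_, ?_, ?_, ?_⟩
      · exact deg_add (deg_mul deg_one_sub_X_sq dP (fun n hn => by omega))
          (deg_mul deg_X_le' (deg_add (deg_C_mul _ dR) (deg_C_mul _ dS)) (fun n hn => by omega))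
      · exact deg_add (deg_mul deg_one_sub_X_sq dQ (fun n hn => by omega))
          (deg_mul deg_X_le' (deg_sub (deg_C_mul _ dS) (deg_C_mul _ dR)) (fun n hn => by omega))
      · exact deg_add (deg_sub (deg_lt_mono dR (by omega))
          (deg_C_mul _ (deg_mul deg_X_le' dP (fun n hn => by omega))))
          (deg_C_mul _ (deg_mul deg_X_le' dQ (fun n hn => by omega)))
      · exact deg_sub (deg_sub (deg_lt_mono dS (by omega))
          (deg_C_mul _ (deg_mul deg_X_le' dP (fun n hn => by omega))))
          (deg_C_mul _ (deg_mul deg_X_le' dQ (fun n hn => by omega)))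
      · exact deg_add (deg_mul deg_X_sq dP2 (fun n hn => by omega))
          (deg_mul deg_one_sub_X_sq (deg_add (deg_C_mul _ dR2) (deg_C_mul _ dS2))
            (fun n hn => by omega))
      · exact deg_add (deg_mul deg_X_sq dQ2 (fun n hn => by omega))
          (deg_mul deg_one_sub_X_sq (deg_sub (deg_C_mul _ dS2) (deg_C_mul _ dR2))
            (fun n hn => by omega))
      · exact deg_add (deg_sub (deg_lt_mono dR2 (by omega))
          (deg_C_mul _ (deg_lt_mono dP2 (by omega))))
          (deg_C_mul _ (deg_lt_mono dQ2 (by omega)))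
      · exact deg_sub (deg_sub (deg_lt_mono dS2 (by omega))
          (deg_C_mul _ (deg_lt_mono dP2 (by omega))))
          (deg_C_mul _ (deg_lt_mono dQ2 (by omega)))
      intro θ
      obtain ⟨hP, hQ, hR, hS, hprod, hnorm⟩ := hpt θ
      set x : ℝ := Real.cos (θ/2) with hxdef
      set y : ℝ := Real.sin (θ/2) with hydef
      have hxy : x^2 + y^2 = 1 := Real.cos_sq_add_sin_sq _
      have hxyc : (x:ℂ)^2 + (y:ℂ)^2 = 1 := by exact_mod_cast hxy
      simp only [h0, h1, Nat.sub_zero, Nat.sub_self, pow_zero, pow_one, one_mul]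
        at hprod hnorm ⊢
      refine ⟨?_, ?_, ?_, ?_, ?_, ?_⟩
      · simp only [Polynomial.eval_add, Polynomial.eval_mul, Polynomial.eval_sub,
          Polynomial.eval_one, Polynomial.eval_pow, Polynomial.eval_X, Polynomial.eval_C]
        linear_combination (1 - y^2)*hP + (y*cf)*hR + (y*sf)*hS +
          (cf * R2.eval x + sf * S2.eval x - P2.eval x) * hxy
      · simp only [Polynomial.eval_add, Polynomial.eval_mul, Polynomial.eval_sub,
          Polynomial.eval_one, Polynomial.eval_pow, Polynomial.eval_X, Polynomial.eval_C]
        linear_combination (1 - y^2)*hQ + (y*cf)*hS - (y*sf)*hR +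
          (cf * S2.eval x - sf * R2.eval x - Q2.eval x) * hxy
      · simp only [Polynomial.eval_add, Polynomial.eval_mul, Polynomial.eval_sub,
          Polynomial.eval_one, Polynomial.eval_pow, Polynomial.eval_X, Polynomial.eval_C]
        linear_combination hR - (y*cf)*hP + (y*sf)*hQ
      · simp only [Polynomial.eval_add, Polynomial.eval_mul, Polynomial.eval_sub,
          Polynomial.eval_one, Polynomial.eval_pow, Polynomial.eval_X, Polynomial.eval_C]
        linear_combination hS - (y*sf)*hP - (y*cf)*hQ
      · rw [hsplit θ, hprod, Rrot_eq, Op_mul, ← hcf, ← hsf, ← hxdef, ← hydef]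
        simp only [Polynomial.eval_add, Polynomial.eval_mul, Polynomial.eval_sub,
          Polynomial.eval_one, Polynomial.eval_pow, Polynomial.eval_X, Polynomial.eval_C]
        apply Op_congr <;> push_cast <;>
          first
            | ring1
            | linear_combination ((P.eval y : ℝ) : ℂ) * hxyc
            | linear_combination ((Q.eval y : ℝ) : ℂ) * hxyc
      · have rA : Polynomial.eval y ((1 - X^2) * P + X * (C cf * R + C sf * S)) =
            x * (x * P.eval y) + y*cf*(R.eval y) + y*sf*(S.eval y) := by
          simp only [Polynomial.eval_add, Polynomial.eval_mul, Polynomial.eval_sub,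
            Polynomial.eval_one, Polynomial.eval_pow, Polynomial.eval_X, Polynomial.eval_C]
          linear_combination (-(P.eval y)) * hxy
        have rB : Polynomial.eval y ((1 - X^2) * Q + X * (C cf * S - C sf * R)) =
            x * (x * Q.eval y) + y*cf*(S.eval y) - y*sf*(R.eval y) := by
          simp only [Polynomial.eval_add, Polynomial.eval_mul, Polynomial.eval_sub,
            Polynomial.eval_one, Polynomial.eval_pow, Polynomial.eval_X, Polynomial.eval_C]
          linear_combination (-(Q.eval y)) * hxy
        have rC : x * Polynomial.eval y (R - C cf * (X * P) + C sf * (X * Q)) =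
            x * R.eval y - y*cf*(x * P.eval y) + y*sf*(x * Q.eval y) := by
          simp only [Polynomial.eval_add, Polynomial.eval_mul, Polynomial.eval_sub,
            Polynomial.eval_one, Polynomial.eval_pow, Polynomial.eval_X, Polynomial.eval_C]
          ring
        have rD : x * Polynomial.eval y (S - C sf * (X * P) - C cf * (X * Q)) =
            x * S.eval y - y*sf*(x * P.eval y) - y*cf*(x * Q.eval y) := by
          simp only [Polynomial.eval_add, Polynomial.eval_mul, Polynomial.eval_sub,
            Polynomial.eval_one, Polynomial.eval_pow, Polynomial.eval_X, Polynomial.eval_C]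
          ring
        rw [rA, rB, rC, rD]
        linear_combination (x^2 + y^2*(cf^2+sf^2)) * hnorm + hxy + y^2 * hcs

/-- **Structure of quantum signal processing products.**
For angles `φ₁, …, φ_l`, the product `U_Φ(θ) = R_{φ_l}(θ)⋯R_{φ₁}(θ)` equals
`a(x)·I + i b(x)·Z + i c̃·X + i d̃·Y` where `a, b` are real polynomials in
`x = cos(θ/2)`, and `c̃, d̃` are real polynomials in `y = sin(θ/2)`
(multiplied by `x` when `l` is even), all of degree at most `l`, with
`a² + b² + c̃² + d̃² = 1`. -/
theorem qsp_product_structure (l : ℕ) (φ : Fin l → ℝ) :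
    ∃ a b c d : Polynomial ℝ,
      a.natDegree ≤ l ∧ b.natDegree ≤ l ∧ c.natDegree ≤ l ∧ d.natDegree ≤ l ∧
      ∀ θ : ℝ,
        letI x : ℝ := Real.cos (θ / 2)
        letI y : ℝ := Real.sin (θ / 2)
        letI cval : ℝ := if Even l then x * c.eval y else c.eval y
        letI dval : ℝ := if Even l then x * d.eval y else d.eval y
        (List.ofFn fun i : Fin l => Rrot (φ i) θ).reverse.prod =
            (((a.eval x : ℝ) : ℂ)) • (1 : Matrix (Fin 2) (Fin 2) ℂ) +
              (Complex.I * ((b.eval x : ℝ) : ℂ)) • PZ +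
              (Complex.I * (cval : ℂ)) • PX +
              (Complex.I * (dval : ℂ)) • PY ∧
          a.eval x ^ 2 + b.eval x ^ 2 + cval ^ 2 + dval ^ 2 = 1 := by
  obtain ⟨P, Q, R, S, P2, Q2, R2, S2, dP, dQ, dR, dS, dP2, dQ2, dR2, dS2, hpt⟩ := qsp_aux l φ
  by_cases hev : Even l
  · have h0 : l % 2 = 0 := Nat.even_iff.mp hev
    refine ⟨P2, Q2, R, S,
      natDeg_le_of_deg_lt (deg_lt_mono dP2 (by omega)),
      natDeg_le_of_deg_lt (deg_lt_mono dQ2 (by omega)),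
      natDeg_le_of_deg_lt (deg_lt_mono dR (by omega)),
      natDeg_le_of_deg_lt (deg_lt_mono dS (by omega)), ?_⟩
    intro θ
    obtain ⟨hP, hQ, hR, hS, hprod, hnorm⟩ := hpt θ
    have f1 : Real.cos (θ/2) ^ (l % 2) * P.eval (Real.sin (θ/2)) =
        P2.eval (Real.cos (θ/2)) := by
      rw [h0, pow_zero, one_mul, hP]
    have f2 : Real.cos (θ/2) ^ (l % 2) * Q.eval (Real.sin (θ/2)) =
        Q2.eval (Real.cos (θ/2)) := by
      rw [h0, pow_zero, one_mul, hQ]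
    have f3 : Real.cos (θ/2) ^ (1 - l % 2) * R.eval (Real.sin (θ/2)) =
        Real.cos (θ/2) * R.eval (Real.sin (θ/2)) := by
      rw [h0]
      norm_num
    have f4 : Real.cos (θ/2) ^ (1 - l % 2) * S.eval (Real.sin (θ/2)) =
        Real.cos (θ/2) * S.eval (Real.sin (θ/2)) := by
      rw [h0]
      norm_num
    refine ⟨?_, ?_⟩
    · simp only [if_pos hev]
      rw [hprod]
      exact Op_congr (by rw [f1]) (by rw [f2]) (by rw [f3]) (by rw [f4])
    · simp only [if_pos hev]
      rw [← f1, ← f2, ← f3, ← f4]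
      exact hnorm
  · have h1 : l % 2 = 1 := Nat.odd_iff.mp (Nat.not_even_iff_odd.mp hev)
    refine ⟨Polynomial.X * P2, Polynomial.X * Q2, R, S,
      natDeg_le_of_deg_lt (deg_mul deg_X_le' dP2 (fun n hn => by omega)),
      natDeg_le_of_deg_lt (deg_mul deg_X_le' dQ2 (fun n hn => by omega)),
      natDeg_le_of_deg_lt (deg_lt_mono dR (by omega)),
      natDeg_le_of_deg_lt (deg_lt_mono dS (by omega)), ?_⟩
    intro θ
    obtain ⟨hP, hQ, hR, hS, hprod, hnorm⟩ := hpt θ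
    have f1 : Real.cos (θ/2) ^ (l % 2) * P.eval (Real.sin (θ/2)) =
        (Polynomial.X * P2).eval (Real.cos (θ/2)) := by
      rw [h1, pow_one, hP, Polynomial.eval_mul, Polynomial.eval_X]
    have f2 : Real.cos (θ/2) ^ (l % 2) * Q.eval (Real.sin (θ/2)) =
        (Polynomial.X * Q2).eval (Real.cos (θ/2)) := by
      rw [h1, pow_one, hQ, Polynomial.eval_mul, Polynomial.eval_X]
    have f3 : Real.cos (θ/2) ^ (1 - l % 2) * R.eval (Real.sin (θ/2)) =
        R.eval (Real.sin (θ/2)) := by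
      rw [h1]
      norm_num
    have f4 : Real.cos (θ/2) ^ (1 - l % 2) * S.eval (Real.sin (θ/2)) =
        S.eval (Real.sin (θ/2)) := by
      rw [h1]
      norm_num
    refine ⟨?_, ?_⟩
    · simp only [if_neg hev]
      rw [hprod]
      exact Op_congr (by rw [f1]) (by rw [f2]) (by rw [f3]) (by rw [f4])
    · simp only [if_neg hev]
      rw [← f1, ← f2, ← f3, ← f4]
      exact hnorm


end
end
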